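/- Let f ∈ ℂ[h] with deg f = n > 1 and suppose a ∈ ℂ*, b ∈ ℂ satisfy f(ah + b) = a f(h) + b. Then a^{n−1} = 1 and b = (a − 1)·a_{n−1} / (n·a_n), where a_n, a_{n−1} are the coefficients of h^n and h^{n−1} in f. -/

import Mathlib

open Polynomial
open Finset in
lemma coeff_linear_pow (a b : ℂ) (e m : ℕ) :
    ((C a * X + C b) ^ e).coeff m = e.choose m * a ^ m * b ^ (e - m) := by
  rw [add_pow]
  rw [finset_sum_coeff]
  have h : ∀ k ∈ Finset.range (e+1),
      ((C a * X) ^ k * C b ^ (e - k) * (e.choose k : ℂ[X])).coeff m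
        = if k = m then (e.choose m : ℂ) * a ^ m * b ^ (e - m) else 0 := by
    intro k _
    have : (C a * X) ^ k * C b ^ (e - k) * (e.choose k : ℂ[X])
        = C (a ^ k * b ^ (e - k) * e.choose k) * X ^ k := by
      rw [mul_pow, ← C_pow, ← C_pow, ← C_eq_natCast, C_mul, C_mul]
      ring
    rw [this, coeff_C_mul, coeff_X_pow]
    split_ifs with h1 h2 h2
    · subst h2; ring
    · exact absurd h1.symm h2
    · exact absurd h2.symm h1
    · simp
  rw [Finset.sum_congr rfl h, Finset.sum_ite_eq' (Finset.range (e+1)) m]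
  split_ifs with hm
  · rfl
  · simp at hm
    rw [Nat.choose_eq_zero_of_lt hm]
    simp


/-- If deg f = n > 1 and f(ah+b) = a f(h) + b with a ≠ 0, then a^(n-1) = 1 and
b = (a-1)·a_{n-1}/(n·a_n), where a_n, a_{n-1} are the top coefficients of f. -/
theorem affine_symmetry_constraints (f : ℂ[X]) (n : ℕ) (hn : 1 < n)
    (hdeg : f.natDegree = n) (a b : ℂ) (ha : a ≠ 0)
    (hab : f.comp (C a * X + C b) = C a * f + C b) :
    a ^ (n - 1) = 1 ∧ b = (a - 1) * f.coeff (n - 1) / (n * f.coeff n) := by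
  obtain ⟨m, rfl⟩ : ∃ m, n = m + 2 := ⟨n - 2, by omega⟩
  have hfn : f.coeff (m + 2) ≠ 0 := by
    rw [← hdeg]
    exact Polynomial.leadingCoeff_ne_zero.mpr (fun h => by simp [h] at hdeg)
  have hrep : f.comp (C a * X + C b)
      = ∑ i ∈ Finset.range (m + 3), C (f.coeff i) * (C a * X + C b) ^ i := by
    rw [comp_eq_sum_left]
    exact f.sum_over_range' (by simp) _ (by omega)
  have hco : ∀ k, (∑ i ∈ Finset.range (m + 3), C (f.coeff i) * (C a * X + C b) ^ i).coeff k
      = ∑ i ∈ Finset.range (m + 3), f.coeff i * (i.choose k * a ^ k * b ^ (i - k)) := by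
    intro k
    rw [finset_sum_coeff]
    exact Finset.sum_congr rfl fun i _ => by rw [coeff_C_mul, coeff_linear_pow]
  have e1 := congrArg (fun p => p.coeff (m + 2)) hab
  have e2 := congrArg (fun p => p.coeff (m + 1)) hab
  simp only [hrep, hco, coeff_add, coeff_C_mul, coeff_C] at e1 e2
  rw [show m + 3 = (m + 1) + 1 + 1 by ring] at e1 e2
  rw [Finset.sum_range_succ, Finset.sum_range_succ] at e1 e2
  have z1 : ∀ i ∈ Finset.range (m + 1),
      f.coeff i * (↑(i.choose (m + 2)) * a ^ (m + 2) * b ^ (i - (m + 2))) = 0 := by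
    intro i hi
    simp at hi
    rw [Nat.choose_eq_zero_of_lt (by omega)]
    simp
  have z2 : ∀ i ∈ Finset.range (m + 1),
      f.coeff i * (↑(i.choose (m + 1)) * a ^ (m + 1) * b ^ (i - (m + 1))) = 0 := by
    intro i hi
    simp at hi
    rw [Nat.choose_eq_zero_of_lt (by omega)]
    simp
  rw [Finset.sum_eq_zero z1] at e1
  rw [Finset.sum_eq_zero z2] at e2
  simp [Nat.choose_self, Nat.choose_eq_zero_of_lt, Nat.choose_succ_self_right] at e1 e2
  -- e1 : f.coeff (m+2) * a^(m+2) = a * f.coeff (m+2)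
  -- derive a^(m+1) = 1
  have ha1 : a ^ (m + 1) = 1 := by
    have : a ^ (m + 2) = a := by
      have h := e1
      rw [mul_comm (f.coeff (m + 2)) (a ^ (m + 2))] at h
      rw [mul_comm a (f.coeff (m + 2)), mul_comm (f.coeff (m + 2)) a] at h
      exact mul_right_cancel₀ hfn h
    have h2 : a ^ (m + 1) * a = 1 * a := by rw [one_mul, ← pow_succ]; exact this
    exact mul_right_cancel₀ ha h2
  refine ⟨by simpa using ha1, ?_⟩
  rw [ha1] at e2
  have hm2 : ((m : ℂ) + 2) ≠ 0 := by
    exact_mod_cast (Nat.cast_ne_zero (R := ℂ)).mpr (by omega : m + 2 ≠ 0)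
  have : (↑(m + 2) : ℂ) * f.coeff (m + 2) ≠ 0 := by
    push_cast
    exact mul_ne_zero hm2 hfn
  rw [eq_div_iff this, show m + 2 - 1 = m + 1 by omega]
  push_cast
  linear_combination e2
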